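/- Fix s > 0 and n ≥ 1, and let p_n ∈ MvPolynomial (Fin n) ℝ be p_n = (1/n) • ∑_{k : Fin n} (X_k^2 - C s). Then the Laplacian of p_n is the constant 2, i.e. ∑_{i : Fin n} pderiv i (pderiv i p_n) = C 2, and the L² norm of p_n with respect to the product Gaussian satisfies ∫ (MvPolynomial.eval x p_n)^2 dγ_s^n(x) = 2 s² / n. (In particular p_n → 0 in L² while Δ p_n = 2 for all n, exhibiting the nonclosability of the Laplacian on polynomials.) -/

import Mathlib

open MeasureTheory ProbabilityTheory MvPolynomial Real

section aux

lemma gauss_withDensity (v : NNReal) (hv : v ≠ 0) (g : ℝ → ℝ) :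
    ∫ x, g x ∂(gaussianReal 0 v) = ∫ x, gaussianPDFReal 0 v x * g x := by
  rw [gaussianReal_of_var_ne_zero _ hv]
  have : (gaussianPDF 0 v) = fun x => ((gaussianPDFReal 0 v x).toNNReal : ENNReal) := by
    ext x; rw [gaussianPDF]; rfl
  rw [this, integral_withDensity_eq_integral_smul
    ((measurable_gaussianPDFReal 0 v).real_toNNReal) g]
  congr 1; ext x
  rw [NNReal.smul_def, smul_eq_mul, Real.coe_toNNReal _ (gaussianPDFReal_nonneg 0 v x)]

lemma gauss_integrable (v : NNReal) (hv : v ≠ 0) (g : ℝ → ℝ)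
    (h : Integrable (fun x => gaussianPDFReal 0 v x * g x)) :
    Integrable g (gaussianReal 0 v) := by
  rw [gaussianReal_of_var_ne_zero _ hv]
  have : (gaussianPDF 0 v) = fun x => ((gaussianPDFReal 0 v x).toNNReal : ENNReal) := by
    ext x; rw [gaussianPDF]; rfl
  rw [this, integrable_withDensity_iff_integrable_smul
    ((measurable_gaussianPDFReal 0 v).real_toNNReal)]
  refine h.congr (ae_of_all _ fun x => ?_)
  simp only [NNReal.smul_def, smul_eq_mul, Real.coe_toNNReal _ (gaussianPDFReal_nonneg 0 v x)]

lemma integrable_pow_mul_gauss {b : ℝ} (hb : 0 < b) (k : ℕ) :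
    Integrable (fun x : ℝ => x ^ k * Real.exp (-b * x ^ 2)) := by
  have : (-1 : ℝ) < k := neg_one_lt_zero.trans_le (Nat.cast_nonneg _)
  
  simpa [Real.rpow_natCast] using integrable_rpow_mul_exp_neg_mul_sq hb this

lemma integral_even_pow_mul_gauss {b : ℝ} (hb : 0 < b) (k : ℕ) :
    ∫ x : ℝ, x ^ (2 * k) * Real.exp (-b * x ^ 2)
      = b ^ (-(2 * (k:ℝ) + 1) / 2) * Real.Gamma ((2 * (k:ℝ) + 1) / 2) := by
  have h1 : ∀ x : ℝ, x ^ (2 * k) * Real.exp (-b * x ^ 2)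
      = (fun t : ℝ => t ^ ((2 * k : ℕ) : ℝ) * Real.exp (-b * t ^ ((2:ℕ) : ℝ))) |x| := by
    intro x
    simp only [Real.rpow_natCast]
    rw [pow_mul, pow_mul, sq_abs]
  calc ∫ x : ℝ, x ^ (2 * k) * Real.exp (-b * x ^ 2)
      = ∫ x : ℝ, (fun t : ℝ => t ^ ((2 * k : ℕ) : ℝ) * Real.exp (-b * t ^ ((2:ℕ) : ℝ))) |x| := by
        simp_rw [h1]
    _ = 2 * ∫ x in Set.Ioi (0:ℝ), x ^ ((2 * k : ℕ) : ℝ) * Real.exp (-b * x ^ ((2:ℕ) : ℝ)) :=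
        integral_comp_abs (f := fun t : ℝ => t ^ ((2 * k : ℕ) : ℝ) * Real.exp (-b * t ^ ((2:ℕ) : ℝ)))
    _ = b ^ (-(2 * (k:ℝ) + 1) / 2) * Real.Gamma ((2 * (k:ℝ) + 1) / 2) := by
        rw [integral_rpow_mul_exp_neg_mul_rpow (by norm_num) (neg_one_lt_zero.trans_le (Nat.cast_nonneg _)) hb]
        push_cast
        ring

lemma gauss_moment (s : ℝ) (hs : 0 < s) (k : ℕ) :
    ∫ x, x ^ (2 * k) ∂(gaussianReal 0 s.toNNReal)
      = (√(2 * π * s))⁻¹ * (((2*s)⁻¹) ^ (-(2 * (k:ℝ) + 1) / 2)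
        * Real.Gamma ((2 * (k:ℝ) + 1) / 2)) := by
  have hv : s.toNNReal ≠ 0 := by simp [Real.toNNReal_eq_zero, hs, not_le]
  have hc : (0:ℝ) < (2*s)⁻¹ := by positivity
  have hcoe : ((s.toNNReal : ℝ)) = s := Real.coe_toNNReal s hs.le
  rw [gauss_withDensity _ hv]
  have heq : ∀ x : ℝ, gaussianPDFReal 0 s.toNNReal x * x ^ (2*k)
      = (√(2 * π * s))⁻¹ * (x ^ (2*k) * Real.exp (-(2*s)⁻¹ * x ^ 2)) := by
    intro x
    rw [gaussianPDFReal, hcoe, sub_zero, show -x^2/(2*s) = -(2*s)⁻¹ * x^2 by ring]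
    ring
  simp_rw [heq]
  rw [integral_const_mul, integral_even_pow_mul_gauss hc k]

lemma gauss_m2 (s : ℝ) (hs : 0 < s) :
    ∫ x, x ^ 2 ∂(gaussianReal 0 s.toNNReal) = s := by
  have h := gauss_moment s hs 1
  norm_num at h
  rw [show (s⁻¹ * (1/2) : ℝ) = (2*s)⁻¹ by ring] at h
  set t := √(2*s) with htdef
  have ht : 0 < t := Real.sqrt_pos.mpr (by linarith)
  have ht2 : t ^ 2 = 2 * s := Real.sq_sqrt (by linarith)
  have hπ : (0:ℝ) < √π := Real.sqrt_pos.mpr Real.pi_pos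
  have h1 : √(2 * π * s) = √π * t := by
    rw [htdef, show 2 * π * s = π * (2 * s) by ring, Real.sqrt_mul Real.pi_pos.le]
  have h2 : ((2*s)⁻¹ : ℝ) ^ (-((3:ℝ)/2)) = t ^ 3 := by
    rw [← ht2, ← Real.rpow_natCast t 2, ← Real.rpow_natCast t 3,
      ← Real.inv_rpow (by positivity), ← Real.rpow_neg_one,
      ← Real.rpow_mul ht.le, ← Real.rpow_mul (by positivity)]
    norm_num
  have h3 : Real.Gamma ((3:ℝ)/2) = (1/2) * √π := by
    rw [show (3:ℝ)/2 = 1/2 + 1 by norm_num, Real.Gamma_add_one (by norm_num),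
      Real.Gamma_one_half_eq]
  rw [h, h1, h2, h3]
  have : t ^ 3 = t ^ 2 * t := by ring
  rw [this, ht2]
  field_simp

lemma gauss_m4 (s : ℝ) (hs : 0 < s) :
    ∫ x, x ^ 4 ∂(gaussianReal 0 s.toNNReal) = 3 * s ^ 2 := by
  have h := gauss_moment s hs 2
  norm_num at h
  rw [show (s⁻¹ * (1/2) : ℝ) = (2*s)⁻¹ by ring] at h
  set t := √(2*s) with htdef
  have ht : 0 < t := Real.sqrt_pos.mpr (by linarith)
  have ht2 : t ^ 2 = 2 * s := Real.sq_sqrt (by linarith)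
  have hπ : (0:ℝ) < √π := Real.sqrt_pos.mpr Real.pi_pos
  have h1 : √(2 * π * s) = √π * t := by
    rw [htdef, show 2 * π * s = π * (2 * s) by ring, Real.sqrt_mul Real.pi_pos.le]
  have h2 : ((2*s)⁻¹ : ℝ) ^ (-((5:ℝ)/2)) = t ^ 5 := by
    rw [← ht2, ← Real.rpow_natCast t 2, ← Real.rpow_natCast t 5,
      ← Real.inv_rpow (by positivity), ← Real.rpow_neg_one,
      ← Real.rpow_mul ht.le, ← Real.rpow_mul (by positivity)]
    norm_num
  have h3 : Real.Gamma ((5:ℝ)/2) = (3/4) * √π := by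
    rw [show (5:ℝ)/2 = 3/2 + 1 by norm_num, Real.Gamma_add_one (by norm_num),
      show (3:ℝ)/2 = 1/2 + 1 by norm_num, Real.Gamma_add_one (by norm_num),
      Real.Gamma_one_half_eq]
    ring
  rw [h, h1, h2, h3]
  have : t ^ 5 = (t ^ 2) ^ 2 * t := by ring
  rw [this, ht2]
  field_simp
  ring

lemma integrable_pow_gauss (s : ℝ) (hs : 0 < s) (k : ℕ) :
    Integrable (fun x : ℝ => x ^ k) (gaussianReal 0 s.toNNReal) := by
  have hv : s.toNNReal ≠ 0 := by simp [Real.toNNReal_eq_zero, hs, not_le]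
  have hc : (0:ℝ) < (2*s)⁻¹ := by positivity
  have hcoe : ((s.toNNReal : ℝ)) = s := Real.coe_toNNReal s hs.le
  refine gauss_integrable _ hv _ ?_
  have heq : ∀ x : ℝ, gaussianPDFReal 0 s.toNNReal x * x ^ k
      = (√(2 * π * s))⁻¹ * (x ^ k * Real.exp (-(2*s)⁻¹ * x ^ 2)) := by
    intro x
    rw [gaussianPDFReal, hcoe, sub_zero, show -x^2/(2*s) = -(2*s)⁻¹ * x^2 by ring]
    ring
  simp_rw [heq]
  exact (integrable_pow_mul_gauss hc k).const_mul _

lemma integrable_g_gauss (s : ℝ) (hs : 0 < s) :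
    Integrable (fun x : ℝ => x ^ 2 - s) (gaussianReal 0 s.toNNReal) :=
  (integrable_pow_gauss s hs 2).sub (integrable_const s)

lemma integrable_gg_gauss (s : ℝ) (hs : 0 < s) :
    Integrable (fun x : ℝ => (x ^ 2 - s) * (x ^ 2 - s)) (gaussianReal 0 s.toNNReal) := by
  have : (fun x : ℝ => (x ^ 2 - s) * (x ^ 2 - s))
      = fun x : ℝ => x ^ 4 - (2 * s) * x ^ 2 + s ^ 2 := by
    ext x; ring
  rw [this]
  exact ((integrable_pow_gauss s hs 4).sub
    ((integrable_pow_gauss s hs 2).const_mul (2*s))).add (integrable_const _)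

lemma integral_g_gauss (s : ℝ) (hs : 0 < s) :
    ∫ x, (x ^ 2 - s) ∂(gaussianReal 0 s.toNNReal) = 0 := by
  rw [integral_sub (integrable_pow_gauss s hs 2) (integrable_const s),
    gauss_m2 s hs, integral_const]
  simp

lemma integral_gg_gauss (s : ℝ) (hs : 0 < s) :
    ∫ x, (x ^ 2 - s) * (x ^ 2 - s) ∂(gaussianReal 0 s.toNNReal) = 2 * s ^ 2 := by
  have : (fun x : ℝ => (x ^ 2 - s) * (x ^ 2 - s))
      = fun x : ℝ => x ^ 4 - (2 * s) * x ^ 2 + s ^ 2 := by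
    ext x; ring
  have h2 : Integrable (fun x : ℝ => (2*s) * x ^ 2) (gaussianReal 0 s.toNNReal) :=
    (integrable_pow_gauss s hs 2).const_mul (2*s)
  have hsub : Integrable (fun x : ℝ => x ^ 4 - (2*s) * x ^ 2) (gaussianReal 0 s.toNNReal) :=
    (integrable_pow_gauss s hs 4).sub h2
  rw [this, integral_add hsub (integrable_const _),
    integral_sub (integrable_pow_gauss s hs 4) h2,
    integral_const_mul, gauss_m2 s hs, gauss_m4 s hs, integral_const]
  simp
  ring

end aux

/-- The product Gaussian measure `γ_r^d` of variance `r` on `Fin d → ℝ`. -/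
noncomputable def gaussianPi (d : ℕ) (r : ℝ) : Measure (Fin d → ℝ) :=
  Measure.pi (fun _ : Fin d => gaussianReal 0 r.toNNReal)

/-- For `p_n = (1/n) ∑_k (X_k² - s)`, the Laplacian of `p_n` is the constant `2`, while
the `L²(γ_s^n)` norm of `p_n` is `2s²/n` (which tends to `0`): the Laplacian on polynomials
is not closable. -/
theorem laplacian_not_closable_witness
    (s : ℝ) (hs : 0 < s) (n : ℕ) (hn : 1 ≤ n)
    (pn : MvPolynomial (Fin n) ℝ)
    (hpn : pn = ((1 : ℝ) / n) • ∑ k : Fin n, (X k ^ 2 - C s)) :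
    (∑ i : Fin n, pderiv i (pderiv i pn)) = C 2 ∧
      ∫ x, (MvPolynomial.eval x pn) ^ 2 ∂(gaussianPi n s) = 2 * s ^ 2 / n := by
  constructor
  ·
    have hn' : (n : ℝ) ≠ 0 := by
      simpa using Nat.one_le_iff_ne_zero.mp hn
    have h2 : (2 : MvPolynomial (Fin n) ℝ) = C (2:ℝ) := by
      simp [map_ofNat]
    subst hpn
    simp [pderiv_X, Pi.single_apply, Finset.mul_sum, apply_ite, mul_ite, h2, pderiv_C,
      Finset.sum_const, Finset.card_univ, smul_smul]
    rw [show ((n : MvPolynomial (Fin n) ℝ)) = C (n:ℝ) by simp, smul_eq_C_mul, ← mul_assoc,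
      ← C_mul, ← C_mul]
    rw [inv_mul_cancel₀ hn']; norm_num
  ·
    have hn' : (n : ℝ) ≠ 0 := by
      simpa using Nat.one_le_iff_ne_zero.mp hn
    letI : MeasureSpace ℝ := ⟨gaussianReal 0 s.toNNReal⟩
    haveI : IsProbabilityMeasure (volume : Measure ℝ) :=
      inferInstanceAs (IsProbabilityMeasure (gaussianReal 0 s.toNNReal))
    have hμ : gaussianPi n s = (volume : Measure (Fin n → ℝ)) := by
      rw [gaussianPi, volume_pi]
      rfl
    set g : ℝ → ℝ := fun t => t ^ 2 - s with hg
    set h : Fin n → Fin n → Fin n → ℝ → ℝ :=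
      fun j k i t => (if j = i then g t else 1) * (if k = i then g t else 1) with hh
    -- integrability of each h j k i
    have hgg : Integrable (fun t : ℝ => g t * g t) (volume : Measure ℝ) :=
      integrable_gg_gauss s hs
    have hg1 : Integrable g (volume : Measure ℝ) := integrable_g_gauss s hs
    have hint : ∀ j k i, Integrable (h j k i) volume := by
      intro j k i
      by_cases hj : j = i <;> by_cases hk : k = i
      · have : h j k i = fun t => g t * g t := by
          funext t; simp only [hh]; rw [if_pos hj, if_pos hk]
        rw [this]; exact hgg
      · have : h j k i = g := by
          funext t; simp only [hh]; rw [if_pos hj, if_neg hk, mul_one]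
        rw [this]; exact hg1
      · have : h j k i = g := by
          funext t; simp only [hh]; rw [if_neg hj, if_pos hk, one_mul]
        rw [this]; exact hg1
      · have : h j k i = fun _ => (1:ℝ) := by
          funext t; simp only [hh]; rw [if_neg hj, if_neg hk, mul_one]
        rw [this]; exact integrable_const 1
    have hprod : ∀ j k (x : Fin n → ℝ), g (x j) * g (x k) = ∏ i, h j k i (x i) := by
      intro j k x
      simp only [hh]
      rw [Finset.prod_mul_distrib, Finset.prod_ite_eq, Finset.prod_ite_eq]
      simp
    have hFint : ∀ j k, Integrable (fun x : Fin n → ℝ => g (x j) * g (x k)) volume := by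
      intro j k
      have := Integrable.fintype_prod (f := h j k) (fun i => hint j k i)
      refine this.congr (ae_of_all _ fun x => ?_)
      exact (hprod j k x).symm
    have hFval : ∀ j k, (∫ x : Fin n → ℝ, g (x j) * g (x k))
        = if j = k then 2 * s ^ 2 else 0 := by
      intro j k
      have : (∫ x : Fin n → ℝ, g (x j) * g (x k)) = ∏ i, ∫ t : ℝ, h j k i t := by
        simp_rw [hprod j k]
        exact integral_fintype_prod_eq_prod (h j k)
      rw [this]
      rcases eq_or_ne j k with rfl | hjk
      · rw [if_pos rfl]
        have : ∀ i, (∫ t : ℝ, h j j i t) = if j = i then 2 * s ^ 2 else 1 := by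
          intro i
          by_cases hj : j = i
          · rw [if_pos hj]
            have he : ∀ t : ℝ, h j j i t = (t ^ 2 - s) * (t ^ 2 - s) := by
              intro t; simp [hh, hg, if_pos hj]
            simp_rw [he]
            exact integral_gg_gauss s hs
          · rw [if_neg hj]
            have he : ∀ t : ℝ, h j j i t = 1 := by
              intro t; simp [hh, if_neg hj]
            simp_rw [he]
            simp
        simp_rw [this]
        rw [Finset.prod_ite_eq]
        simp
      · rw [if_neg hjk]
        refine Finset.prod_eq_zero (Finset.mem_univ j) ?_
        have he : ∀ t : ℝ, h j k j t = t ^ 2 - s := by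
          intro t; simp [hh, hg, if_neg (Ne.symm hjk)]
        simp_rw [he]
        exact integral_g_gauss s hs
    -- main computation
    have heval : ∀ x : Fin n → ℝ, MvPolynomial.eval x pn = (1/(n:ℝ)) * ∑ k, g (x k) := by
      intro x
      rw [hpn]
      simp [hg, smul_eval]
    have heval2 : ∀ x : Fin n → ℝ, (MvPolynomial.eval x pn) ^ 2
        = (1/(n:ℝ))^2 * ∑ j, ∑ k, g (x j) * g (x k) := by
      intro x
      rw [heval x, mul_pow, sq (∑ k, g (x k)), Finset.sum_mul_sum]
    rw [hμ]
    calc ∫ x : Fin n → ℝ, (MvPolynomial.eval x pn) ^ 2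
        = ∫ x : Fin n → ℝ, (1/(n:ℝ))^2 * ∑ j, ∑ k, g (x j) * g (x k) := by
          simp_rw [heval2]
      _ = (1/(n:ℝ))^2 * ∫ x : Fin n → ℝ, ∑ j, ∑ k, g (x j) * g (x k) := integral_const_mul _ _
      _ = (1/(n:ℝ))^2 * ∑ j, ∑ k, ∫ x : Fin n → ℝ, g (x j) * g (x k) := by
          rw [integral_finset_sum _ (fun j _ => integrable_finset_sum _ (fun k _ => hFint j k))]
          congr 1
          exact Finset.sum_congr rfl fun j _ => integral_finset_sum _ (fun k _ => hFint j k)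
      _ = (1/(n:ℝ))^2 * ∑ j : Fin n, (2 * s ^ 2) := by
          congr 1
          refine Finset.sum_congr rfl fun j _ => ?_
          simp_rw [hFval]
          simp
      _ = 2 * s ^ 2 / n := by
          rw [Finset.sum_const, Finset.card_univ, Fintype.card_fin]
          field_simp
          ring
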